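/- Let S be an n×n real skew-symmetric matrix with strictly lower triangular part L_s and strictly upper triangular part U_s = −L_sᵀ (so S = L_s + U_s), and let ω > 0. Then the matrix P = (1/ω)(I + ωL_s)(I + ωU_s) is positive definite (xᵀPx > 0 for all x ≠ 0) if and only if ω < 1/‖L_s‖₂, where ‖·‖₂ is the spectral norm. -/

import Mathlib

open Matrix

/-- The spectral norm (largest singular value) of a real square matrix. -/
noncomputable def l2OpNorm {n : ℕ} (L : Matrix (Fin n) (Fin n) ℝ) : ℝ :=
  ‖Matrix.toEuclideanCLM (𝕜 := ℝ) L‖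

private lemma exists_unit_norm_attained {n : ℕ} [Nonempty (Fin n)]
    (T : EuclideanSpace ℝ (Fin n) →L[ℝ] EuclideanSpace ℝ (Fin n)) :
    ∃ x : EuclideanSpace ℝ (Fin n), ‖x‖ = 1 ∧ ‖T x‖ = ‖T‖ := by
  have hsph : IsCompact (Metric.sphere (0 : EuclideanSpace ℝ (Fin n)) 1) :=
    isCompact_sphere _ _
  have hne : (Metric.sphere (0 : EuclideanSpace ℝ (Fin n)) 1).Nonempty := by
    refine ⟨EuclideanSpace.single (Classical.arbitrary _) (1 : ℝ), ?_⟩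
    simp [mem_sphere_zero_iff_norm]
  obtain ⟨x, hx, hmax⟩ := hsph.exists_isMaxOn hne
    ((continuous_norm.comp T.continuous).continuousOn)
  rw [mem_sphere_zero_iff_norm] at hx
  refine ⟨x, hx, le_antisymm (by simpa [hx] using T.unit_le_opNorm x hx.le) ?_⟩
  refine ContinuousLinearMap.opNorm_le_of_unit_norm (norm_nonneg _) ?_
  intro y hy
  exact hmax (mem_sphere_zero_iff_norm.mpr hy)

theorem botchev_golub_posdef {n : ℕ}
    (S Ls Us : Matrix (Fin n) (Fin n) ℝ)
    (hS : Sᵀ = -S)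
    (hLs : ∀ i j : Fin n, i ≤ j → Ls i j = 0)
    (hUs : Us = -Lsᵀ)
    (hSsum : S = Ls + Us)
    (ω : ℝ) (hω : 0 < ω)
    (P : Matrix (Fin n) (Fin n) ℝ)
    (hP : P = ω⁻¹ • ((1 + ω • Ls) * (1 + ω • Us))) :
    (∀ x : Fin n → ℝ, x ≠ 0 → 0 < x ⬝ᵥ P.mulVec x) ↔
      (Ls = 0 ∨ ω < 1 / l2OpNorm Ls) := by
  have hω' : ω ≠ 0 := ne_of_gt hω
  -- matrix identity : P = ω⁻¹ • 1 + S - ω • (Ls * Lsᵀ)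
  have hPeq : P = ω⁻¹ • (1 : Matrix (Fin n) (Fin n) ℝ) + S - ω • (Ls * Lsᵀ) := by
    rw [hP, hSsum, hUs]
    have key : ∀ A B : Matrix (Fin n) (Fin n) ℝ,
        (1 + A) * (1 + B) = 1 + A + B + A * B := fun A B => by noncomm_ring
    rw [key, Matrix.smul_mul, Matrix.mul_smul, Matrix.mul_neg]
    simp only [smul_add, smul_smul, smul_neg]
    rw [inv_mul_cancel₀ hω', one_smul, one_smul]
    have h2 : ω⁻¹ * (ω * ω) = ω := by field_simp
    rw [h2]
    abel
  set e : (Fin n → ℝ) ≃ EuclideanSpace ℝ (Fin n) := (WithLp.equiv 2 (Fin n → ℝ)).symm with he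
  set T : EuclideanSpace ℝ (Fin n) →L[ℝ] EuclideanSpace ℝ (Fin n) :=
    Matrix.toEuclideanCLM (𝕜 := ℝ) Lsᵀ with hT
  have hdot : ∀ y : Fin n → ℝ, y ⬝ᵥ y = ‖e y‖ ^ 2 := by
    intro y
    rw [← real_inner_self_eq_norm_sq]
    simp [he, PiLp.inner_apply, dotProduct, mul_comm]
    rw [EuclideanSpace.real_norm_sq_eq]; simp [sq]
  have hTapp : ∀ x : Fin n → ℝ, T (e x) = e (Lsᵀ.mulVec x) := by
    intro x
    simp [hT, he, Matrix.toEuclideanCLM_toLp, Matrix.toLin'_apply]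
  have hquad : ∀ x : Fin n → ℝ,
      x ⬝ᵥ P.mulVec x = ω⁻¹ * ‖e x‖ ^ 2 - ω * ‖T (e x)‖ ^ 2 := by
    intro x
    have hskew : x ⬝ᵥ S.mulVec x = 0 := by
      have h1 : x ⬝ᵥ S.mulVec x = Sᵀ.mulVec x ⬝ᵥ x := by
        rw [Matrix.dotProduct_mulVec, ← Matrix.mulVec_transpose]
      rw [hS, Matrix.neg_mulVec, neg_dotProduct, dotProduct_comm] at h1
      rw [dotProduct_comm]
      linarith
    have hLL : x ⬝ᵥ (Ls * Lsᵀ).mulVec x = (Lsᵀ.mulVec x) ⬝ᵥ (Lsᵀ.mulVec x) := by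
      rw [← Matrix.mulVec_mulVec, Matrix.dotProduct_mulVec, ← Matrix.mulVec_transpose]
    rw [hPeq]
    rw [Matrix.sub_mulVec, Matrix.add_mulVec, Matrix.smul_mulVec,
      Matrix.smul_mulVec, Matrix.one_mulVec]
    rw [dotProduct_sub, dotProduct_add, dotProduct_smul,
      dotProduct_smul, hskew, hLL, hTapp, ← hdot, ← hdot]
    simp only [smul_eq_mul]
    ring
  -- norm of T equals l2OpNorm Ls
  have hTnorm : ‖T‖ = l2OpNorm Ls := by
    have hstar : Lsᵀ = star Ls := by
      rw [Matrix.star_eq_conjTranspose, Matrix.conjTranspose]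
      ext i j; simp
    rw [hT, hstar, map_star, ContinuousLinearMap.star_eq_adjoint, l2OpNorm]
    exact LinearIsometryEquiv.norm_map ContinuousLinearMap.adjoint _
  constructor
  · intro h
    by_cases hL0 : Ls = 0
    · exact Or.inl hL0
    right
    have hn : Nonempty (Fin n) := by
      by_contra hne
      exact hL0 (by ext i j; exact absurd ⟨i⟩ hne)
    have hTne : T ≠ 0 := by
      intro h0
      apply hL0
      have h1 : Lsᵀ = 0 :=
        (Matrix.toEuclideanCLM (n := Fin n) (𝕜 := ℝ)).injective (by rw [map_zero]; exact h0)
      simpa using congrArg Matrix.transpose h1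
    have hTpos : 0 < ‖T‖ := norm_pos_iff.mpr hTne
    obtain ⟨x, hx1, hxT⟩ := exists_unit_norm_attained T
    have hx0 : e.symm x ≠ 0 := by
      intro h0
      have hx' : x = 0 := by simpa [he] using congrArg e h0
      rw [hx'] at hx1; simp at hx1
    have hq := h (e.symm x) hx0
    rw [hquad] at hq
    simp only [Equiv.apply_symm_apply] at hq
    rw [hx1, hxT] at hq
    have hinv : ω⁻¹ * ω = 1 := inv_mul_cancel₀ hω'
    have hlt1 : ω * ‖T‖ < 1 := by nlinarith [hq, hTpos, hω, hinv, mul_pos hω hTpos]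
    rw [← hTnorm]
    exact (lt_div_iff₀ hTpos).mpr hlt1
  · intro h x hx0
    rw [hquad]
    have hex : e x ≠ 0 := by
      intro h0
      exact hx0 (by simpa [he] using congrArg e.symm h0)
    have hexn : 0 < ‖e x‖ := norm_pos_iff.mpr hex
    rcases h with hL0 | hlt
    · have hT0 : T = 0 := by
        rw [hT, hL0]
        simp
      rw [hT0]
      simp only [ContinuousLinearMap.zero_apply, norm_zero]
      have : (0:ℝ) < ω⁻¹ * ‖e x‖ ^ 2 := mul_pos (inv_pos.mpr hω) (pow_pos hexn 2)
      nlinarith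
    · have hNpos : 0 < l2OpNorm Ls := by
        by_contra hN
        push_neg at hN
        have hN0 : l2OpNorm Ls = 0 :=
          le_antisymm hN (by rw [l2OpNorm]; exact norm_nonneg _)
        rw [hN0] at hlt
        simp at hlt
        linarith
      rw [lt_div_iff₀ hNpos] at hlt
      have hb : ‖T (e x)‖ ≤ l2OpNorm Ls * ‖e x‖ := by
        rw [← hTnorm]
        exact T.le_opNorm _
      have hTn : 0 ≤ ‖T (e x)‖ := norm_nonneg _
      have h1 : ω * ‖T (e x)‖ < ‖e x‖ := by
        calc ω * ‖T (e x)‖ ≤ ω * (l2OpNorm Ls * ‖e x‖) := by nlinarith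
        _ < ‖e x‖ := by nlinarith
      have h2 : (ω * ‖T (e x)‖) * (ω * ‖T (e x)‖) < ‖e x‖ * ‖e x‖ :=
        mul_self_lt_mul_self (by positivity) h1
      have h3 : ω * (ω * ‖T (e x)‖ ^ 2) < ω * (ω⁻¹ * ‖e x‖ ^ 2) := by
        rw [← mul_assoc, ← mul_assoc, mul_inv_cancel₀ hω', one_mul]
        nlinarith [h2]
      have h4 := lt_of_mul_lt_mul_left h3 hω.le
      linarith
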